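/- With Ψ as above (the real-valued functions X_n for n ∈ K ∪ M and Y_n for n ∈ K built from the Vilenkin system), Ψ is a complete orthonormal system of L²(G): if f ∈ L²(G) is orthogonal to every element of Ψ, then f = 0 a.e. -/

import Mathlib

open MeasureTheory

noncomputable section

/-- `Pprod s k = s 0 * s 1 * ⋯ * s (k-1)`. -/
def Pprod (s : ℕ → ℕ) : ℕ → ℕ
  | 0 => 1
  | k + 1 => Pprod s k * s k

/-- The `k`-th digit of `n` in the mixed-radix expansion determined by `s`. -/
def digit (s : ℕ → ℕ) (n k : ℕ) : ℕ := (n / Pprod s k) % s k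

/-- Digitwise negation `⊖ n`. -/
def oneg (s : ℕ → ℕ) (n : ℕ) : ℕ :=
  ∑ k ∈ Finset.range (n + 1), ((s k - digit s n k) % s k) * Pprod s k

/-- Digitwise addition `n ⊕ m`. -/
def oplus (s : ℕ → ℕ) (n m : ℕ) : ℕ :=
  ∑ k ∈ Finset.range (n + m + 1), ((digit s n k + digit s m k) % s k) * Pprod s k

/-- The complex Vilenkin function `ψ n` on `G = ∏ k, ℤ/(s k)ℤ`. -/
def vil (s : ℕ → ℕ) (n : ℕ) (x : ∀ k, ZMod (s k)) : ℂ :=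
  ∏ k ∈ Finset.range (n + 1),
    Complex.exp (2 * (Real.pi : ℂ) * Complex.I * (digit s n k : ℂ) * ((x k).val : ℂ) / (s k : ℂ))

/-- `X n`: real part (times `√2` when `n ≠ ⊖n`) of the Vilenkin function. -/
def Xf (s : ℕ → ℕ) (n : ℕ) (x : ∀ k, ZMod (s k)) : ℝ :=
  if oneg s n = n then (vil s n x).re else Real.sqrt 2 * (vil s n x).re

/-- `Y n = √2 · Im ψ n`. -/
def Yf (s : ℕ → ℕ) (n : ℕ) (x : ∀ k, ZMod (s k)) : ℝ :=
  Real.sqrt 2 * (vil s n x).im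

open Complex

section NT
variable {s : ℕ → ℕ} (hs : ∀ k, 2 ≤ s k)
include hs

lemma Pprod_pos (k : ℕ) : 0 < Pprod s k := by
  induction k with
  | zero => simp [Pprod]
  | succ k ih => have := hs k; simp only [Pprod]; exact Nat.mul_pos ih (by omega)

lemma two_pow_le_Pprod (k : ℕ) : 2 ^ k ≤ Pprod s k := by
  induction k with
  | zero => simp [Pprod]
  | succ k ih =>
      have := hs k
      calc 2 ^ (k+1) = 2 ^ k * 2 := by ring
      _ ≤ Pprod s k * s k := Nat.mul_le_mul ih this
      _ = Pprod s (k+1) := rfl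

lemma lt_Pprod_of_lt {n k : ℕ} (h : n < k) : n < Pprod s k :=
  lt_of_lt_of_le (lt_trans h (Nat.lt_two_pow_self (n := k))) (two_pow_le_Pprod hs k)

lemma lt_Pprod_self (n : ℕ) : n < Pprod s (n + 1) :=
  lt_Pprod_of_lt hs (Nat.lt_succ_self n)

lemma digit_lt (n k : ℕ) : digit s n k < s k :=
  Nat.mod_lt _ (by have := hs k; omega)

omit hs in lemma digit_eq_zero_of_lt_Pprod {n k : ℕ} (h : n < Pprod s k) : digit s n k = 0 := by
  simp [digit, Nat.div_eq_of_lt h]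

lemma digit_eq_zero {n k : ℕ} (h : n < k) : digit s n k = 0 :=
  digit_eq_zero_of_lt_Pprod (lt_Pprod_of_lt hs h)

omit hs in lemma Pprod_dvd {i k : ℕ} (h : i ≤ k) : Pprod s i ∣ Pprod s k := by
  induction k with
  | zero => simp_all
  | succ k ih =>
      rcases Nat.lt_succ_iff_lt_or_eq.mp (Nat.lt_succ_of_le h) with h' | h'
      · exact dvd_trans (ih (by omega)) (dvd_mul_right _ _)
      · subst h'; exact dvd_refl _

lemma Pprod_le {i k : ℕ} (h : i ≤ k) : Pprod s i ≤ Pprod s k :=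
  Nat.le_of_dvd (Pprod_pos hs k) (Pprod_dvd h)

omit hs in lemma mod_mul_expand (n a b : ℕ) : n % (a * b) = n % a + a * (n / a % b) := by
  conv_lhs => rw [← Nat.div_add_mod (n % (a * b)) a]
  rw [Nat.mod_mul_right_div_self, Nat.mod_mod_of_dvd _ (dvd_mul_right a b)]
  ring

omit hs in lemma mod_Pprod_eq_sum (n K : ℕ) :
    n % Pprod s K = ∑ k ∈ Finset.range K, digit s n k * Pprod s k := by
  induction K with
  | zero => simp [Pprod, Nat.mod_one]
  | succ K ih =>
      rw [Finset.sum_range_succ, ← ih]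
      show n % (Pprod s K * s K) = _
      rw [mod_mul_expand]
      show _ = _ + (n / Pprod s K % s K) * Pprod s K
      ring

omit hs in lemma eq_sum_digits {n K : ℕ} (h : n < Pprod s K) :
    n = ∑ k ∈ Finset.range K, digit s n k * Pprod s k := by
  rw [← mod_Pprod_eq_sum, Nat.mod_eq_of_lt h]

omit hs in lemma sum_digits_lt (c : ℕ → ℕ) (hc : ∀ k, c k < s k) (K : ℕ) :
    ∑ k ∈ Finset.range K, c k * Pprod s k < Pprod s K := by
  induction K with
  | zero => simp [Pprod]
  | succ K ih =>
      rw [Finset.sum_range_succ]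
      calc _ < Pprod s K + c K * Pprod s K := by omega
      _ = (c K + 1) * Pprod s K := by ring
      _ ≤ s K * Pprod s K := Nat.mul_le_mul_right _ (hc K)
      _ = Pprod s (K + 1) := by show _ = Pprod s K * s K; ring

lemma digit_sum (c : ℕ → ℕ) (hc : ∀ k, c k < s k) {K j : ℕ} (hj : j < K) :
    digit s (∑ k ∈ Finset.range K, c k * Pprod s k) j = c j := by
  obtain ⟨D, hD⟩ : Pprod s (j + 1) ∣ ∑ k ∈ Finset.Ico (j + 1) K, c k * Pprod s k :=
    Finset.dvd_sum fun k hk =>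
      Dvd.dvd.mul_left (Pprod_dvd (Finset.mem_Ico.mp hk).1) _
  have hsplit : ∑ k ∈ Finset.range K, c k * Pprod s k
      = (∑ k ∈ Finset.range j, c k * Pprod s k) + Pprod s j * (c j + s j * D) := by
    rw [Finset.range_eq_Ico, ← Finset.sum_Ico_consecutive _ (Nat.zero_le (j+1)) hj,
      ← Finset.range_eq_Ico, Finset.sum_range_succ, hD]
    show _ = _ + Pprod s j * (c j + s j * D)
    have : Pprod s (j + 1) = Pprod s j * s j := rfl
    rw [this]; ring
  have hA : (∑ k ∈ Finset.range j, c k * Pprod s k) < Pprod s j := sum_digits_lt c hc j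
  rw [hsplit]
  unfold digit
  rw [Nat.add_mul_div_left _ _ (Pprod_pos hs j), Nat.div_eq_of_lt hA, Nat.zero_add,
    Nat.add_mul_mod_self_left, Nat.mod_eq_of_lt (hc j)]

lemma oneg_c_lt (n k : ℕ) : (s k - digit s n k) % s k < s k := Nat.mod_lt _ (by have := hs k; omega)

lemma digit_oneg {n j : ℕ} (hj : j ≤ n) :
    digit s (oneg s n) j = (s j - digit s n j) % s j :=
  digit_sum hs _ (oneg_c_lt hs n) (by omega)

lemma oneg_lt (n : ℕ) : oneg s n < Pprod s (n + 1) := sum_digits_lt _ (oneg_c_lt hs n) _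

lemma digit_oneg_zero {n j : ℕ} (hj : n < j) : digit s (oneg s n) j = 0 :=
  digit_eq_zero_of_lt_Pprod (lt_of_lt_of_le (oneg_lt hs n) (Pprod_le hs (by omega)))

lemma digit_oneg_add (n j : ℕ) : (digit s (oneg s n) j + digit s n j) % s j = 0 := by
  rcases le_or_gt j n with hj | hj
  · rw [digit_oneg hs hj, Nat.mod_add_mod, Nat.sub_add_cancel (le_of_lt (digit_lt hs n j)),
      Nat.mod_self]
  · rw [digit_oneg_zero hs hj, digit_eq_zero hs hj]; simp

lemma digit_nonzero_le_oneg {n j : ℕ} (hd : digit s n j ≠ 0) : j ≤ oneg s n := by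
  have hjn : j ≤ n := by
    by_contra h
    exact hd (digit_eq_zero hs (by omega))
  have hc : 1 ≤ (s j - digit s n j) % s j := by
    have h1 := digit_lt (s := s) hs n j
    have h2 : s j - digit s n j < s j := by omega
    rw [Nat.mod_eq_of_lt h2]; omega
  have : (s j - digit s n j) % s j * Pprod s j ≤ oneg s n :=
    Finset.single_le_sum (f := fun k => (s k - digit s n k) % s k * Pprod s k)
      (fun i _ => Nat.zero_le _) (Finset.mem_range.mpr (by omega))
  have hP : j + 1 ≤ Pprod s j := le_trans (Nat.lt_two_pow_self (n := j)) (two_pow_le_Pprod hs j)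
  have hP2 : Pprod s j ≤ oneg s n :=
    le_trans (Nat.le_mul_of_pos_left _ hc) this
  omega

lemma oneg_oneg (n : ℕ) : oneg s (oneg s n) = n := by
  set m := oneg s n with hm
  have hdig : ∀ j, digit s (oneg s m) j = digit s n j := by
    intro j
    rcases le_or_gt j m with hjm | hjm
    · rw [digit_oneg hs hjm]
      rcases le_or_gt j n with hjn | hjn
      · rw [hm, digit_oneg hs hjn]
        rcases Nat.eq_zero_or_pos (digit s n j) with h0 | h0
        · simp [h0]
        · have h1 := digit_lt (s := s) hs n j
          rw [Nat.mod_eq_of_lt (by omega : s j - digit s n j < s j),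
            Nat.sub_sub_self (by omega), Nat.mod_eq_of_lt h1]
      · rw [hm, digit_oneg_zero hs hjn, digit_eq_zero hs hjn, Nat.sub_zero, Nat.mod_self]
    · rw [digit_oneg_zero hs hjm]
      by_contra h
      exact absurd (digit_nonzero_le_oneg hs (Ne.symm h)) (by omega)
  set K := max (oneg s m) n + 1 with hK
  have h1 : oneg s m < Pprod s K := lt_Pprod_of_lt hs (by omega)
  have h2 : n < Pprod s K := lt_Pprod_of_lt hs (by omega)
  rw [eq_sum_digits h1, eq_sum_digits h2]
  exact Finset.sum_congr rfl fun k _ => by rw [hdig k]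

end NT

section AN
variable {s : ℕ → ℕ}

variable {s : ℕ → ℕ}

lemma abs_factor (d v sk : ℕ) :
    ‖Complex.exp (2 * (Real.pi : ℂ) * Complex.I * (d : ℂ) * (v : ℂ) / (sk : ℂ))‖ = 1 := by
  have h : (2 * (Real.pi : ℂ) * Complex.I * (d : ℂ) * (v : ℂ) / (sk : ℂ))
      = ((2 * Real.pi * d * v / sk : ℝ) : ℂ) * Complex.I := by
    push_cast; ring
  rw [h, Complex.norm_exp_ofReal_mul_I]

lemma abs_vil (n : ℕ) (x : ∀ k, ZMod (s k)) : ‖vil s n x‖ = 1 := by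
  unfold vil
  rw [norm_prod]
  exact Finset.prod_eq_one fun k _ => abs_factor _ _ _

lemma factor_congr {d d' sk : ℕ} (v : ℕ) (hsk : sk ≠ 0) (h : (d + d') % sk = 0) :
    Complex.exp (2 * (Real.pi : ℂ) * Complex.I * (d : ℂ) * (v : ℂ) / (sk : ℂ))
      = (starRingEnd ℂ) (Complex.exp (2 * (Real.pi : ℂ) * Complex.I * (d' : ℂ) * (v : ℂ) / (sk : ℂ))) := by
  obtain ⟨t, ht⟩ := (Nat.dvd_iff_mod_eq_zero).mpr h
  rw [← Complex.exp_conj]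
  have hconj : (starRingEnd ℂ) (2 * (Real.pi : ℂ) * Complex.I * (d' : ℂ) * (v : ℂ) / (sk : ℂ))
      = -(2 * (Real.pi : ℂ) * Complex.I * (d' : ℂ) * (v : ℂ) / (sk : ℂ)) := by
    simp [map_div₀, Complex.conj_I, map_ofNat]
    ring
  rw [hconj]
  have hcast : (d : ℂ) + d' = sk * t := by exact_mod_cast congrArg (Nat.cast : ℕ → ℂ) ht
  have hsk' : (sk : ℂ) ≠ 0 := Nat.cast_ne_zero.mpr hsk
  have key : 2 * (Real.pi : ℂ) * Complex.I * (d : ℂ) * (v : ℂ) / (sk : ℂ)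
      = -(2 * (Real.pi : ℂ) * Complex.I * (d' : ℂ) * (v : ℂ) / (sk : ℂ))
        + (((t * v : ℕ) : ℤ) : ℂ) * (2 * (Real.pi : ℂ) * Complex.I) := by
    field_simp
    push_cast
    linear_combination (v : ℂ) * hcast
  rw [key, Complex.exp_add, Complex.exp_int_mul_two_pi_mul_I, mul_one]

end AN

section MORE
variable {s : ℕ → ℕ} (hs : ∀ k, 2 ≤ s k)
include hs

lemma vil_prod_ext {n K : ℕ} (hK : n < K) (x : ∀ k, ZMod (s k)) :
    vil s n x = ∏ k ∈ Finset.range K,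
      Complex.exp (2 * (Real.pi : ℂ) * Complex.I * (digit s n k : ℂ) * (((x k).val : ℕ) : ℂ) / (s k : ℂ)) := by
  unfold vil
  refine Finset.prod_subset (Finset.range_subset_range.mpr (by omega)) ?_
  intro k _ hk
  have hk' : n < k := by simpa using Nat.lt_of_succ_le (Nat.not_lt.mp (by simpa using hk))
  rw [digit_eq_zero hs hk']
  norm_num

lemma conj_vil (n : ℕ) (x : ∀ k, ZMod (s k)) :
    (starRingEnd ℂ) (vil s n x) = vil s (oneg s n) x := by
  set K := max n (oneg s n) + 1 with hK
  rw [vil_prod_ext hs (show n < K by omega) x,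
    vil_prod_ext hs (show oneg s n < K by omega) x, map_prod]
  refine Finset.prod_congr rfl fun k _ => ?_
  exact (factor_congr ((x k).val) (by have := hs k; omega) (digit_oneg_add hs n k)).symm

end MORE

lemma aesm_mul_conj {α : Type*} [MeasurableSpace α] {μ : Measure α} {f g : α → ℂ}
    (hf : AEStronglyMeasurable f μ)
    (hfg : AEStronglyMeasurable (fun x => f x * g x) μ) :
    AEStronglyMeasurable (fun x => f x * (starRingEnd ℂ) (g x)) μ := by
  obtain ⟨f₁, hf₁, hff₁⟩ := hf
  obtain ⟨q, hq, hq'⟩ := hfg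
  refine ⟨fun x => if f₁ x = 0 then 0 else f₁ x / (starRingEnd ℂ) (f₁ x) * (starRingEnd ℂ) (q x),
    ?_, ?_⟩
  · apply Measurable.stronglyMeasurable
    refine Measurable.ite (hf₁.measurable (measurableSet_singleton 0)) measurable_const ?_
    exact (hf₁.measurable.div (Complex.continuous_conj.measurable.comp hf₁.measurable)).mul
      (Complex.continuous_conj.measurable.comp hq.measurable)
  · filter_upwards [hff₁, hq'] with x h1 h2
    by_cases h0 : f x = 0
    · simp [h0, ← h1, show f₁ x = 0 from h1 ▸ h0]
    · have hne : f₁ x ≠ 0 := h1 ▸ h0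
      rw [if_neg hne, ← h1, ← h2, map_mul]
      have hcne : (starRingEnd ℂ) (f₁ x) ≠ 0 := by simpa using hne
      have hc0 : (starRingEnd ℂ) (f x) ≠ 0 := by simpa using h0
      field_simp [← h1]

lemma abs_Xf_le (s : ℕ → ℕ) (n : ℕ) (x : ∀ k, ZMod (s k)) : |Xf s n x| ≤ Real.sqrt 2 := by
  have h1 : |(vil s n x).re| ≤ 1 := by
    have := Complex.abs_re_le_norm (vil s n x)
    rw [abs_vil] at this; exact this
  have h2 : (1:ℝ) ≤ Real.sqrt 2 := by
    rw [show (1:ℝ) = Real.sqrt 1 by simp]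
    exact Real.sqrt_le_sqrt (by norm_num)
  unfold Xf
  split
  · linarith
  · rw [abs_mul, _root_.abs_of_nonneg (Real.sqrt_nonneg 2)]
    nlinarith [Real.sqrt_nonneg 2]

lemma abs_Yf_le (s : ℕ → ℕ) (n : ℕ) (x : ∀ k, ZMod (s k)) : |Yf s n x| ≤ Real.sqrt 2 := by
  have h1 : |(vil s n x).im| ≤ 1 := by
    have := Complex.abs_im_le_norm (vil s n x)
    rw [abs_vil] at this; exact this
  unfold Yf
  rw [abs_mul, _root_.abs_of_nonneg (Real.sqrt_nonneg 2)]
  nlinarith [Real.sqrt_nonneg 2, Real.sqrt_le_sqrt (show (1:ℝ) ≤ 2 by norm_num)]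


lemma integrable_mul_XY {s : ℕ → ℕ} (hs : ∀ k, 2 ≤ s k) [∀ k, MeasurableSpace (ZMod (s k))]
    {μ : Measure (∀ k, ZMod (s k))} [IsFiniteMeasure μ]
    {f : (∀ k, ZMod (s k)) → ℂ} (hf : MemLp f 2 μ) (j : ℕ)
    (h1 : AEStronglyMeasurable (fun x => f x * vil s j x) μ)
    (h2 : AEStronglyMeasurable (fun x => f x * (starRingEnd ℂ) (vil s j x)) μ) :
    Integrable (fun x => f x * ((Xf s j x : ℝ) : ℂ)) μ ∧
      Integrable (fun x => f x * ((Yf s j x : ℝ) : ℂ)) μ := by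
  have hfint : Integrable f μ := hf.integrable one_le_two
  have hbound : Integrable (fun x => Real.sqrt 2 * ‖f x‖) μ := hfint.norm.const_mul _
  have hnormX : ∀ x, ‖f x * ((Xf s j x : ℝ) : ℂ)‖ ≤ Real.sqrt 2 * ‖f x‖ := by
    intro x
    rw [norm_mul, Complex.norm_real, Real.norm_eq_abs, mul_comm]
    exact mul_le_mul_of_nonneg_right (abs_Xf_le s j x) (norm_nonneg _)
  have hnormY : ∀ x, ‖f x * ((Yf s j x : ℝ) : ℂ)‖ ≤ Real.sqrt 2 * ‖f x‖ := by
    intro x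
    rw [norm_mul, Complex.norm_real, Real.norm_eq_abs, mul_comm]
    exact mul_le_mul_of_nonneg_right (abs_Yf_le s j x) (norm_nonneg _)
  set C : ℂ := if oneg s j = j then (1/2 : ℂ) else ((Real.sqrt 2 : ℝ) : ℂ) / 2 with hC
  have hXeq : (fun x => f x * ((Xf s j x : ℝ) : ℂ))
      = fun x => C * (f x * vil s j x + f x * (starRingEnd ℂ) (vil s j x)) := by
    funext x
    have hsum : f x * vil s j x + f x * (starRingEnd ℂ) (vil s j x)
        = f x * ((2 * (vil s j x).re : ℝ) : ℂ) := by
      rw [← mul_add, Complex.add_conj]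
    rw [hsum]
    by_cases h : oneg s j = j
    · rw [hC, if_pos h]; unfold Xf; rw [if_pos h]; push_cast; ring
    · rw [hC, if_neg h]; unfold Xf; rw [if_neg h]; push_cast; ring
  have hYeq : (fun x => f x * ((Yf s j x : ℝ) : ℂ))
      = fun x => (-(((Real.sqrt 2 : ℝ) : ℂ) / 2) * Complex.I)
          * (f x * vil s j x - f x * (starRingEnd ℂ) (vil s j x)) := by
    funext x
    have hsub : f x * vil s j x - f x * (starRingEnd ℂ) (vil s j x)
        = f x * (((2 * (vil s j x).im : ℝ) : ℂ) * Complex.I) := by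
      rw [← mul_sub, Complex.sub_conj]
    rw [hsub]
    unfold Yf
    push_cast
    have hI : Complex.I * Complex.I = -1 := Complex.I_mul_I
    ring_nf
    rw [Complex.I_sq]
    ring
  constructor
  · refine Integrable.mono' hbound ?_ (Filter.Eventually.of_forall hnormX)
    rw [hXeq]
    exact ((h1.add h2).const_mul C)
  · refine Integrable.mono' hbound ?_ (Filter.Eventually.of_forall hnormY)
    rw [hYeq]
    exact ((h1.sub h2).const_mul _)

/-- The real Vilenkin system `Ψ` is complete in `L²(G)`. -/
theorem real_vilenkin_complete (s : ℕ → ℕ) (hs : ∀ k, 2 ≤ s k)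
    [∀ k, MeasurableSpace (ZMod (s k))]
    (μ : Measure (∀ k, ZMod (s k))) [IsProbabilityMeasure μ]
    (horth : ∀ n m : ℕ,
      ∫ x, vil s n x * starRingEnd ℂ (vil s m x) ∂μ = if n = m then 1 else 0)
    (hcomp : ∀ g : (∀ k, ZMod (s k)) → ℂ, MemLp g 2 μ →
      (∀ n : ℕ, ∫ x, g x * starRingEnd ℂ (vil s n x) ∂μ = 0) → g =ᵐ[μ] 0) :
    ∀ f : (∀ k, ZMod (s k)) → ℂ, MemLp f 2 μ →
      (∀ n : ℕ, n ≤ oneg s n → ∫ x, f x * (Xf s n x : ℂ) ∂μ = 0) →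
      (∀ n : ℕ, n < oneg s n → ∫ x, f x * (Yf s n x : ℂ) ∂μ = 0) →
      f =ᵐ[μ] 0 := by
  intro f hf hX hY
  refine hcomp f hf ?_
  intro n
  have hsq : (Real.sqrt 2 : ℝ) ≠ 0 := by positivity
  have hconj_re_im : ∀ z : ℂ, (starRingEnd ℂ) z = (z.re : ℂ) - (z.im : ℂ) * Complex.I := by
    intro z; apply Complex.ext <;> simp
  rcases lt_trichotomy n (oneg s n) with hlt | heq | hgt
  · -- n < ⊖n
    by_cases hint : Integrable (fun x => f x * (starRingEnd ℂ) (vil s n x)) μ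
    · have hconjA := hint.1
      have hvilA : AEStronglyMeasurable (fun x => f x * vil s n x) μ := by
        have := aesm_mul_conj (g := fun x => (starRingEnd ℂ) (vil s n x))
          hf.aestronglyMeasurable hconjA
        simpa using this
      obtain ⟨hIX, hIY⟩ := integrable_mul_XY hs hf n hvilA hconjA
      have hne : ¬ (oneg s n = n) := by omega
      set c₁ : ℂ := (((Real.sqrt 2)⁻¹ : ℝ) : ℂ) with hc₁
      set c₂ : ℂ := -(((Real.sqrt 2)⁻¹ : ℝ) : ℂ) * Complex.I with hc₂
      have hpt : ∀ x, f x * (starRingEnd ℂ) (vil s n x)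
          = c₁ • (f x * ((Xf s n x : ℝ) : ℂ)) + c₂ • (f x * ((Yf s n x : ℝ) : ℂ)) := by
        intro x
        rw [hconj_re_im (vil s n x)]
        unfold Xf Yf
        rw [if_neg hne]
        simp only [smul_eq_mul, hc₁, hc₂]
        push_cast
        field_simp
        ring
      calc ∫ x, f x * (starRingEnd ℂ) (vil s n x) ∂μ
          = ∫ x, (c₁ • (f x * ((Xf s n x : ℝ) : ℂ)) + c₂ • (f x * ((Yf s n x : ℝ) : ℂ))) ∂μ := by
            exact integral_congr_ae (Filter.Eventually.of_forall hpt)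
        _ = c₁ • (∫ x, f x * ((Xf s n x : ℝ) : ℂ) ∂μ)
            + c₂ • (∫ x, f x * ((Yf s n x : ℝ) : ℂ) ∂μ) := by
            rw [integral_add (μ := μ) (f := fun x => c₁ • (f x * ((Xf s n x : ℝ) : ℂ)))
              (g := fun x => c₂ • (f x * ((Yf s n x : ℝ) : ℂ))) (hIX.smul c₁) (hIY.smul c₂),
              integral_smul, integral_smul]
        _ = 0 := by rw [hX n hlt.le, hY n hlt, smul_zero, smul_zero, add_zero]
    · exact integral_undef hint
  · -- n = ⊖n
    have key : ∀ x, f x * (starRingEnd ℂ) (vil s n x) = f x * ((Xf s n x : ℝ) : ℂ) := by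
      intro x
      have h1 : (starRingEnd ℂ) (vil s n x) = vil s n x := by
        rw [conj_vil hs, ← heq]
      have h2 : ((vil s n x).re : ℂ) = vil s n x := Complex.conj_eq_iff_re.mp h1
      unfold Xf
      rw [if_pos heq.symm, h1, h2]
    simp only [key]
    exact hX n heq.le
  · -- ⊖n < n
    set m := oneg s n with hmdef
    have hm : oneg s m = n := oneg_oneg hs n
    by_cases hint : Integrable (fun x => f x * (starRingEnd ℂ) (vil s n x)) μ
    · have hconjA := hint.1
      have hcvil : ∀ x, (starRingEnd ℂ) (vil s n x) = vil s m x := fun x => conj_vil hs n x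
      have h_fvm : AEStronglyMeasurable (fun x => f x * vil s m x) μ := by
        have : (fun x => f x * (starRingEnd ℂ) (vil s n x)) = fun x => f x * vil s m x := by
          funext x; rw [hcvil x]
        rwa [this] at hconjA
      have h_fvn : AEStronglyMeasurable (fun x => f x * vil s n x) μ := by
        have := aesm_mul_conj (g := fun x => (starRingEnd ℂ) (vil s n x))
          hf.aestronglyMeasurable hconjA
        simpa using this
      have h_fcm : AEStronglyMeasurable (fun x => f x * (starRingEnd ℂ) (vil s m x)) μ := by
        have hcm : ∀ x, (starRingEnd ℂ) (vil s m x) = vil s n x := by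
          intro x; rw [conj_vil hs m x, hm]
        have : (fun x => f x * (starRingEnd ℂ) (vil s m x)) = fun x => f x * vil s n x := by
          funext x; rw [hcm x]
        rwa [this]
      obtain ⟨hIX, hIY⟩ := integrable_mul_XY hs hf m h_fvm h_fcm
      have hne : ¬ (oneg s m = m) := by omega
      set c₁ : ℂ := (((Real.sqrt 2)⁻¹ : ℝ) : ℂ) with hc₁
      set c₂ : ℂ := (((Real.sqrt 2)⁻¹ : ℝ) : ℂ) * Complex.I with hc₂
      have hpt : ∀ x, f x * (starRingEnd ℂ) (vil s n x)
          = c₁ • (f x * ((Xf s m x : ℝ) : ℂ)) + c₂ • (f x * ((Yf s m x : ℝ) : ℂ)) := by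
        intro x
        rw [hcvil x]
        unfold Xf Yf
        rw [if_neg hne]
        simp only [smul_eq_mul, hc₁, hc₂]
        push_cast
        field_simp
        nth_rewrite 1 [← Complex.re_add_im (vil s m x)]
        ring
      calc ∫ x, f x * (starRingEnd ℂ) (vil s n x) ∂μ
          = ∫ x, (c₁ • (f x * ((Xf s m x : ℝ) : ℂ)) + c₂ • (f x * ((Yf s m x : ℝ) : ℂ))) ∂μ := by
            exact integral_congr_ae (Filter.Eventually.of_forall hpt)
        _ = c₁ • (∫ x, f x * ((Xf s m x : ℝ) : ℂ) ∂μ)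
            + c₂ • (∫ x, f x * ((Yf s m x : ℝ) : ℂ) ∂μ) := by
            rw [integral_add (μ := μ) (f := fun x => c₁ • (f x * ((Xf s m x : ℝ) : ℂ)))
              (g := fun x => c₂ • (f x * ((Yf s m x : ℝ) : ℂ))) (hIX.smul c₁) (hIY.smul c₂),
              integral_smul, integral_smul]
        _ = 0 := by
            rw [hX m (by omega), hY m (by omega), smul_zero, smul_zero, add_zero]
    · exact integral_undef hint
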